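/- Let p, q be positive reals and α, ν real numbers with (ν·ln p − α·ln q)·(p^ν − q^α) > 0. Define g : ℝ → ℝ by g(x) = ((p^ν + q^α)/(p^ν − q^α)) · (p^(xν) − q^(xα))/(p^(xν) + q^(xα)). Then g is strictly increasing on ℝ; in particular, for every integer n > 1 one has g(n) > g(1) = 1. -/

import Mathlib

open Real

theorem stmt_5 (p q α ν : ℝ) (hp : 0 < p) (hq : 0 < q)
    (h : (ν * Real.log p - α * Real.log q) * (p ^ ν - q ^ α) > 0)
    (g : ℝ → ℝ)
    (hg : ∀ x : ℝ, g x = ((p ^ ν + q ^ α) / (p ^ ν - q ^ α))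
      * ((p ^ (x * ν) - q ^ (x * α)) / (p ^ (x * ν) + q ^ (x * α)))) :
    StrictMono g ∧ g 1 = 1 ∧ ∀ n : ℤ, 1 < n → g 1 < g n := by
  have ha : 0 < p ^ ν := rpow_pos_of_pos hp ν
  have hb : 0 < q ^ α := rpow_pos_of_pos hq α
  set a := p ^ ν with ha_def
  set b := q ^ α with hb_def
  have hab : a ≠ b := by
    intro he
    rw [he, sub_self, mul_zero] at h
    exact lt_irrefl 0 h
  have hax : ∀ x : ℝ, p ^ (x * ν) = a ^ x := by
    intro x
    rw [mul_comm x ν, ha_def, Real.rpow_mul hp.le]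
  have hbx : ∀ x : ℝ, q ^ (x * α) = b ^ x := by
    intro x
    rw [mul_comm x α, hb_def, Real.rpow_mul hq.le]
  have hgx : ∀ x : ℝ, g x = ((a + b) / (a - b)) *
      (((a / b) ^ x - 1) / ((a / b) ^ x + 1)) := by
    intro x
    rw [hg x, hax x, hbx x, Real.div_rpow ha.le hb.le]
    have hbxpos : 0 < b ^ x := rpow_pos_of_pos hb x
    have haxpos : 0 < a ^ x := rpow_pos_of_pos ha x
    have hsum : a ^ x + b ^ x ≠ 0 := by positivity
    have hsum2 : a ^ x / b ^ x + 1 ≠ 0 := by positivity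
    rw [mul_eq_mul_left_iff]
    left
    rw [div_eq_div_iff hsum hsum2]
    field_simp
  have key : ∀ u v : ℝ, 0 < u → 0 < v → u < v →
      (u - 1) / (u + 1) < (v - 1) / (v + 1) := by
    intro u v hu hv huv
    rw [div_lt_div_iff₀ (by linarith) (by linarith)]
    nlinarith
  have hmono : StrictMono g := by
    intro x y hxy
    rw [hgx x, hgx y]
    have haxp : 0 < (a / b) ^ x := rpow_pos_of_pos (div_pos ha hb) x
    have hayp : 0 < (a / b) ^ y := rpow_pos_of_pos (div_pos ha hb) y
    rcases lt_or_gt_of_ne hab with hlt | hgt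
    · -- a < b : t < 1, C < 0
      have ht : a / b < 1 := (div_lt_one hb).mpr hlt
      have hC : (a + b) / (a - b) < 0 :=
        div_neg_of_pos_of_neg (by linarith) (by linarith)
      have := key _ _ hayp haxp
        (Real.rpow_lt_rpow_of_exponent_gt (div_pos ha hb) ht hxy)
      exact mul_lt_mul_of_neg_left this hC
    · -- b < a : t > 1, C > 0
      have ht : 1 < a / b := (one_lt_div hb).mpr hgt
      have hC : 0 < (a + b) / (a - b) :=
        div_pos (by linarith) (by linarith)
      have := key _ _ haxp hayp
        (Real.rpow_lt_rpow_of_exponent_lt ht hxy)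
      exact mul_lt_mul_of_pos_left this hC
  have hg1 : g 1 = 1 := by
    rw [hg 1]
    simp only [one_mul]
    have h1 : a - b ≠ 0 := sub_ne_zero.mpr hab
    have h2 : a + b ≠ 0 := by positivity
    field_simp
    rw [← ha_def, ← hb_def]; ring
  refine ⟨hmono, hg1, fun n hn => hmono ?_⟩
  exact_mod_cast hn
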